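/- Let q ≥ 2 and let ν, m, k, t be positive integers with 2ν ≥ 3m+2 and m ≥ k ≥ t+2 ≥ 3. Define N(ν,m,s) = ∏_{i=1}^{m-s} (q^(2(ν-m+i)) - 1)/(q^i - 1). Then q^(k-t)·[t choose 1]_q·(N(ν,m,k-1) − N(ν,m,k)) > (q+1)·N(ν,m,k-1). -/

import Mathlib

/-- The Gaussian binomial coefficient `[a choose b]_q` as a rational number. -/
noncomputable def gaussBinom (q : ℚ) (a b : ℕ) : ℚ :=
  ∏ j ∈ Finset.range b, (q ^ (a - j) - 1) / (q ^ (b - j) - 1)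

/-- `N(ν,m,s)`: the number of totally isotropic `m`-subspaces of a `2ν`-dimensional
symplectic space containing a fixed totally isotropic `s`-subspace. -/
noncomputable def NIso (q : ℚ) (ν m s : ℕ) : ℚ :=
  ∏ i ∈ Finset.Icc 1 (m - s), (q ^ (2 * (ν - m + i)) - 1) / (q ^ i - 1)

theorem stmt_12 (q ν m k t : ℕ) (hq : 2 ≤ q) (hν : 0 < ν) (hm : 0 < m) (hk : 0 < k)
    (ht : 0 < t) (hνm : 3 * m + 2 ≤ 2 * ν) (hkm : k ≤ m) (htk : t + 2 ≤ k) (ht2 : 3 ≤ t + 2) :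
    (q : ℚ) ^ (k - t) * gaussBinom (q : ℚ) t 1 * (NIso (q : ℚ) ν m (k - 1) - NIso (q : ℚ) ν m k) >
      ((q : ℚ) + 1) * NIso (q : ℚ) ν m (k - 1) := by
  have hq' : (2:ℚ) ≤ (q:ℚ) := by exact_mod_cast hq
  have hq1 : (1:ℚ) < (q:ℚ) := by linarith
  have hpow : ∀ e : ℕ, 0 < e → (1:ℚ) < (q:ℚ)^e := fun e he => one_lt_pow₀ hq1 he.ne'
  have hpow1 : ∀ e : ℕ, (1:ℚ) ≤ (q:ℚ)^e := fun e => one_le_pow₀ (le_of_lt hq1)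
  -- gaussBinom simplification
  have hG : gaussBinom (q:ℚ) t 1 = ((q:ℚ)^t - 1)/((q:ℚ) - 1) := by
    simp [gaussBinom]
  -- NIso expansion
  set A := NIso (q:ℚ) ν m k with hAdef
  set r := ((q:ℚ)^(2*(ν-k+1)) - 1)/((q:ℚ)^(m-k+1) - 1) with hrdef
  have expand : NIso (q:ℚ) ν m (k-1) = A * r := by
    rw [hAdef, hrdef]
    unfold NIso
    rw [show m - (k-1) = (m - k) + 1 from by omega,
      Finset.prod_Icc_succ_top (by omega : 1 ≤ m - k + 1),
      show ν - m + (m - k + 1) = ν - k + 1 from by omega]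
  have hA : 0 < A := by
    rw [hAdef]; unfold NIso
    apply Finset.prod_pos
    intro i hi
    rw [Finset.mem_Icc] at hi
    have h1 := hpow (2*(ν-m+i)) (by omega)
    have h2 := hpow i (by omega)
    exact div_pos (by linarith) (by linarith)
  set G := ((q:ℚ)^t - 1)/((q:ℚ) - 1) with hGdef
  set C := (q:ℚ)^(k-t) * G with hCdef
  have hden : (0:ℚ) < (q:ℚ) - 1 := by linarith
  -- lower bound on G
  have hGlb : (q:ℚ)^(t-1) ≤ G := by
    rw [hGdef, le_div_iff₀ hden]
    have h1 := hpow1 (t-1)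
    have h2 : (q:ℚ)^(t-1) * (q:ℚ) = (q:ℚ)^t := by
      rw [← pow_succ]; congr 1; omega
    nlinarith
  -- upper bound on G
  have hGub : G ≤ (q:ℚ)^t - 1 := by
    rw [hGdef, div_le_iff₀ hden]
    have h1 := hpow t ht
    nlinarith
  have hpE : (0:ℚ) < (q:ℚ)^(k-t) := by positivity
  have hClb : (q:ℚ)^(k-1) ≤ C := by
    have := mul_le_mul_of_nonneg_left hGlb (le_of_lt hpE)
    calc (q:ℚ)^(k-1) = (q:ℚ)^(k-t) * (q:ℚ)^(t-1) := by
          rw [← pow_add]; congr 1; omega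
      _ ≤ C := this
  have hCub : C < (q:ℚ)^k := by
    calc C ≤ (q:ℚ)^(k-t) * ((q:ℚ)^t - 1) := by
          exact mul_le_mul_of_nonneg_left hGub (le_of_lt hpE)
      _ < (q:ℚ)^(k-t) * (q:ℚ)^t := by nlinarith
      _ = (q:ℚ)^k := by rw [← pow_add]; congr 1; omega
  have hC2 : (q:ℚ) + 2 ≤ C := by
    have h2 : (q:ℚ)^2 ≤ (q:ℚ)^(k-1) :=
      pow_le_pow_right₀ (le_of_lt hq1) (by omega)
    nlinarith
  -- lower bound on r
  have hdenr : (0:ℚ) < (q:ℚ)^(m-k+1) - 1 := by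
    have := hpow (m-k+1) (by omega); linarith
  have hrlb : (q:ℚ)^(k+1) ≤ r := by
    rw [hrdef, le_div_iff₀ hdenr]
    have h1 : (q:ℚ)^(k+1) * (q:ℚ)^(m-k+1) = (q:ℚ)^(m+2) := by
      rw [← pow_add]; congr 1; omega
    have h2 : (q:ℚ)^(m+2) ≤ (q:ℚ)^(2*(ν-k+1)) :=
      pow_le_pow_right₀ (le_of_lt hq1) (by omega)
    have h3 := hpow1 (k+1)
    nlinarith
  have hkk : (q:ℚ)^k < (q:ℚ)^(k+1) :=
    pow_lt_pow_right₀ hq1 (lt_add_one k)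
  have hrC : C < r := by linarith
  have hr0 : (0:ℚ) < r := by
    have := hpow (k+1) (by omega); linarith
  have key : C * (r - 1) > ((q:ℚ) + 1) * r := by
    have h1 : 0 ≤ (C - ((q:ℚ)+1) - 1) * r :=
      mul_nonneg (by linarith) (le_of_lt hr0)
    have h2 : C * (r-1) - ((q:ℚ)+1)*r = (C - ((q:ℚ)+1) - 1)*r + (r - C) := by ring
    linarith
  have hdiff : 0 < A * (C * (r-1) - ((q:ℚ)+1) * r) := mul_pos hA (by linarith)
  have hfinal : (q:ℚ)^(k-t) * (((q:ℚ)^t - 1)/((q:ℚ) - 1)) * (A*r - A) - ((q:ℚ)+1)*(A*r)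
      = A * (C*(r-1) - ((q:ℚ)+1)*r) := by
    rw [hCdef, hGdef]; ring
  rw [hG, expand]
  linarith [hdiff, hfinal]
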